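/- Let λ_1,…,λ_n ∈ ℂ with |λ_j| = 1 and each λ_j of finite multiplicative order, let G be the finite cyclic group generated by λ_1,…,λ_n, and let φ : 𝔻ⁿ → 𝔻ⁿ be given by φ(z) = (λ_1z_1,…,λ_nz_n). Then for every μ ∈ ℂ with |μ| = 1 and μ ∉ G, and for every Bloch function g on 𝔻ⁿ, there exists a unique Bloch function f on 𝔻ⁿ satisfying f∘φ − μf = g. -/

import Mathlib

open Complex Metric Set

/-- The unit polydisk `𝔻ⁿ = { z ∈ ℂⁿ : |z_k| < 1 for all k }`. -/
def polydisk (n : ℕ) : Set (Fin n → ℂ) := {z | ∀ k, ‖z k‖ < 1}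

/-- The Bergman metric on the polydisk: `H_z(u,ū) = Σ_k |u_k|²/(1−|z_k|²)²`. -/
noncomputable def polyH (n : ℕ) (z u : Fin n → ℂ) : ℝ :=
  ∑ k, ‖u k‖ ^ 2 / (1 - ‖z k‖ ^ 2) ^ 2

/-- `Q_f(z) = sup_{u ≠ 0} |f'(z)u| / H_z(u,ū)^{1/2}` on the polydisk. -/
noncomputable def Qpoly (n : ℕ) (f : (Fin n → ℂ) → ℂ) (z : Fin n → ℂ) : ℝ :=
  sSup {r : ℝ | ∃ u : Fin n → ℂ, u ≠ 0 ∧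
    r = ‖fderiv ℂ f z u‖ / Real.sqrt (polyH n z u)}

/-- The set of values `Q_f(z)` for `z ∈ 𝔻ⁿ`. -/
def blochValuesPoly (n : ℕ) (f : (Fin n → ℂ) → ℂ) : Set ℝ :=
  {r : ℝ | ∃ z ∈ polydisk n, r = Qpoly n f z}

/-- The Bloch seminorm `β_f = sup_{z ∈ 𝔻ⁿ} Q_f(z)`. -/
noncomputable def blochSemiPoly (n : ℕ) (f : (Fin n → ℂ) → ℂ) : ℝ :=
  sSup (blochValuesPoly n f)

/-- `f` is a Bloch function on the polydisk. -/
def IsBlochPoly (n : ℕ) (f : (Fin n → ℂ) → ℂ) : Prop :=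
  DifferentiableOn ℂ f (polydisk n) ∧ BddAbove (blochValuesPoly n f)

/-- The Bloch norm `‖f‖_B = |f(0)| + β_f` on the polydisk. -/
noncomputable def blochNormPoly (n : ℕ) (f : (Fin n → ℂ) → ℂ) : ℝ :=
  ‖f 0‖ + blochSemiPoly n f

lemma aux_mu_pow_ne_one {n : ℕ} {lam : Fin n → ℂ} (hne : ∀ j, lam j ≠ 0)
    {m : ℕ}
    (hm : m = Finset.univ.lcm fun j => orderOf (lam j)) (hm0 : m ≠ 0)
    {μ : ℂ} (hμG : ¬ ∃ k : Fin n → ℕ, μ = ∏ j, lam j ^ k j) : μ ^ m ≠ 1 := by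
  intro hμm
  apply hμG
  set lamU : Fin n → ℂˣ := fun j => Units.mk0 (lam j) (hne j) with hlamU
  have hval : ∀ j, (lamU j : ℂ) = lam j := fun j => rfl
  have hord_eq : ∀ j, orderOf (lamU j) = orderOf (lam j) := fun j =>
    (orderOf_injective (Units.coeHom ℂ) (fun _ _ h => Units.ext h) (lamU j)).symm
  have hlam_pow : ∀ j, lam j ^ m = 1 := fun j => orderOf_dvd_iff_pow_eq_one.1 <| by
    rw [hm]; exact Finset.dvd_lcm (Finset.mem_univ j)
  have hlamU_pow : ∀ j, lamU j ^ m = 1 := fun j => Units.ext (by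
    push_cast [hval]; exact hlam_pow j)
  -- the subgroup of products
  let S : Subgroup ℂˣ :=
    { carrier := Set.range (fun k : Fin n → ℕ => ∏ j, lamU j ^ (k j))
      one_mem' := ⟨fun _ => 0, by simp⟩
      mul_mem' := by
        rintro a b ⟨ka, rfl⟩ ⟨kb, rfl⟩
        exact ⟨ka + kb, by simp [pow_add, Finset.prod_mul_distrib]⟩
      inv_mem' := by
        rintro a ⟨ka, rfl⟩
        refine ⟨fun j => ka j * (m - 1), ?_⟩
        simp only
        rw [eq_inv_iff_mul_eq_one, ← Finset.prod_mul_distrib]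
        rw [Finset.prod_eq_one]
        intro j _
        rw [← pow_add]
        have he : ka j * (m - 1) + ka j = ka j * m := by
          cases m with
          | zero => exact absurd rfl hm0
          | succ m' => simp [Nat.mul_succ]
        rw [he, mul_comm, pow_mul, hlamU_pow, one_pow] }
  have hSfin : (Set.range (fun k : Fin n → ℕ => ∏ j, lamU j ^ (k j))).Finite := by
    have hre : Set.range (fun k : Fin n → ℕ => ∏ j, lamU j ^ (k j)) =
        Set.range (fun k : Fin n → Fin m => ∏ j, lamU j ^ (k j : ℕ)) := by
      ext x
      constructor
      · rintro ⟨k, rfl⟩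
        refine ⟨fun j => ⟨k j % m, Nat.mod_lt _ (Nat.pos_of_ne_zero hm0)⟩, ?_⟩
        simp only
        exact Finset.prod_congr rfl fun j _ => (pow_eq_pow_mod (k j) (hlamU_pow j)).symm
      · rintro ⟨k, rfl⟩
        exact ⟨fun j => (k j : ℕ), rfl⟩
    rw [hre]
    exact Set.finite_range _
  haveI : Finite ↥S := hSfin.to_subtype
  have hexp := Monoid.ExponentExists.of_finite (G := ↥S)
  obtain ⟨gen, hgen⟩ := Monoid.exists_orderOf_eq_exponent hexp
  -- exponent S = m
  have hexp_dvd : Monoid.exponent ↥S ∣ m := by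
    apply Monoid.exponent_dvd_of_forall_pow_eq_one
    rintro ⟨x, hx⟩
    obtain ⟨k, rfl⟩ := hx
    refine Subtype.ext ?_
    show (∏ j, lamU j ^ k j) ^ m = 1
    rw [← Finset.prod_pow]
    exact Finset.prod_eq_one fun j _ => by rw [← pow_mul, mul_comm, pow_mul, hlamU_pow, one_pow]
  have hdvd_exp : m ∣ Monoid.exponent ↥S := by
    rw [hm]
    apply Finset.lcm_dvd
    intro j _
    have hmem : lamU j ∈ S := ⟨fun i => if i = j then 1 else 0, by simp⟩
    have h2 : orderOf (⟨lamU j, hmem⟩ : ↥S) = orderOf (lamU j) :=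
      (orderOf_injective S.subtype S.subtype_injective ⟨lamU j, hmem⟩).symm
    rw [← hord_eq j, ← h2]
    exact Monoid.order_dvd_exponent _
  have hexpm : Monoid.exponent ↥S = m := Nat.dvd_antisymm hexp_dvd hdvd_exp
  -- generator is a primitive m-th root of unity
  obtain ⟨c, hcc⟩ := gen.2
  have hc' : ∏ j, lamU j ^ c j = (gen : ℂˣ) := hcc
  have h1 : orderOf ((gen : ℂˣ) : ℂ) = orderOf (gen : ℂˣ) :=
    orderOf_injective (Units.coeHom ℂ) (fun _ _ h => Units.ext h) (gen : ℂˣ)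
  have h2 : orderOf (gen : ℂˣ) = orderOf gen :=
    orderOf_injective S.subtype S.subtype_injective gen
  have hordc : orderOf ((gen : ℂˣ) : ℂ) = m := by rw [h1, h2, hgen, hexpm]
  have hprim : IsPrimitiveRoot ((gen : ℂˣ) : ℂ) m := hordc ▸ IsPrimitiveRoot.orderOf _
  haveI : NeZero m := ⟨hm0⟩
  obtain ⟨i, _, hi⟩ := hprim.eq_pow_of_pow_eq_one hμm
  refine ⟨fun j => c j * i, ?_⟩
  rw [← hi]
  have hgc : ((gen : ℂˣ) : ℂ) = ∏ j, lam j ^ c j := by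
    rw [← hc']
    push_cast
    rfl
  rw [hgc, ← Finset.prod_pow]
  exact Finset.prod_congr rfl fun j _ => by rw [← pow_mul]

lemma polydisk_open (n : ℕ) : IsOpen (polydisk n) := by
  have h : polydisk n = Set.pi Set.univ (fun _ : Fin n => Metric.ball (0:ℂ) 1) := by
    ext z
    simp [polydisk, Metric.mem_ball, dist_zero_right, Set.mem_univ_pi]
  rw [h]
  exact isOpen_set_pi Set.finite_univ (fun _ _ => Metric.isOpen_ball)

lemma norm_le_sqrt_polyH {n : ℕ} {z : Fin n → ℂ} (hz : z ∈ polydisk n) (u : Fin n → ℂ) :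
    ‖u‖ ≤ Real.sqrt (polyH n z u) := by
  rw [pi_norm_le_iff_of_nonneg (Real.sqrt_nonneg _)]
  intro k
  apply Real.le_sqrt_of_sq_le
  have hzk := hz k
  have h2 : ‖z k‖ ^ 2 < 1 := by nlinarith [norm_nonneg (z k)]
  have hb0 : 0 < 1 - ‖z k‖ ^ 2 := by linarith
  have h3 : 0 ≤ ‖z k‖ ^ 2 := by positivity
  have h1 : ‖u k‖ ^ 2 ≤ ‖u k‖ ^ 2 / (1 - ‖z k‖ ^ 2) ^ 2 := by
    apply le_div_self (by positivity) (by positivity)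
    nlinarith
  refine h1.trans ?_
  exact Finset.single_le_sum (f := fun k => ‖u k‖ ^ 2 / (1 - ‖z k‖ ^ 2) ^ 2)
    (fun i _ => by positivity) (Finset.mem_univ k)

lemma inner_bddAbove {n : ℕ} (f : (Fin n → ℂ) → ℂ) {z : Fin n → ℂ} (hz : z ∈ polydisk n) :
    BddAbove {r : ℝ | ∃ u : Fin n → ℂ, u ≠ 0 ∧
      r = ‖fderiv ℂ f z u‖ / Real.sqrt (polyH n z u)} := by
  refine ⟨‖fderiv ℂ f z‖, ?_⟩
  rintro r ⟨u, hu, rfl⟩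
  rcases eq_or_lt_of_le (Real.sqrt_nonneg (polyH n z u)) with h | h
  · rw [← h, div_zero]
    exact norm_nonneg _
  · rw [div_le_iff₀ h]
    calc ‖fderiv ℂ f z u‖ ≤ ‖fderiv ℂ f z‖ * ‖u‖ := (fderiv ℂ f z).le_opNorm u
      _ ≤ ‖fderiv ℂ f z‖ * Real.sqrt (polyH n z u) := by
          gcongr
          exact norm_le_sqrt_polyH hz u

lemma Qpoly_le_of_bound {n : ℕ} {f : (Fin n → ℂ) → ℂ} {z : Fin n → ℂ} {B : ℝ} (hB : 0 ≤ B)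
    (h : ∀ u : Fin n → ℂ, u ≠ 0 →
      ‖fderiv ℂ f z u‖ / Real.sqrt (polyH n z u) ≤ B) : Qpoly n f z ≤ B := by
  apply Real.sSup_le _ hB
  rintro r ⟨u, hu, rfl⟩
  exact h u hu

lemma le_Qpoly {n : ℕ} (f : (Fin n → ℂ) → ℂ) {z : Fin n → ℂ} (hz : z ∈ polydisk n)
    {u : Fin n → ℂ} (hu : u ≠ 0) :
    ‖fderiv ℂ f z u‖ / Real.sqrt (polyH n z u) ≤ Qpoly n f z :=
  le_csSup (inner_bddAbove f hz) ⟨u, hu, rfl⟩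

section Rot
variable {n : ℕ} (lam : Fin n → ℂ)

/-- The diagonal rotation `z ↦ (lam_1^i z_1, …)` as a continuous linear map. -/
noncomputable def rotCLM (i : ℕ) : (Fin n → ℂ) →L[ℂ] (Fin n → ℂ) :=
  ContinuousLinearMap.pi (fun j => (lam j ^ i) • (ContinuousLinearMap.proj j))

lemma rotCLM_apply (i : ℕ) (z : Fin n → ℂ) (j : Fin n) :
    rotCLM lam i z j = lam j ^ i * z j := rfl

variable (hmod : ∀ j, ‖lam j‖ = 1)
include hmod

lemma rot_norm (i : ℕ) (z : Fin n → ℂ) (j : Fin n) : ‖rotCLM lam i z j‖ = ‖z j‖ := by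
  rw [rotCLM_apply, norm_mul, norm_pow, hmod, one_pow, one_mul]

lemma rot_mem (i : ℕ) {z : Fin n → ℂ} (hz : z ∈ polydisk n) : rotCLM lam i z ∈ polydisk n := by
  intro j
  rw [rot_norm lam hmod]
  exact hz j

lemma rot_polyH (i : ℕ) (z u : Fin n → ℂ) :
    polyH n (rotCLM lam i z) (rotCLM lam i u) = polyH n z u := by
  unfold polyH
  exact Finset.sum_congr rfl fun j _ => by rw [rot_norm lam hmod, rot_norm lam hmod]

lemma rot_ne_zero (i : ℕ) {u : Fin n → ℂ} (hu : u ≠ 0) : rotCLM lam i u ≠ 0 := by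
  intro h
  apply hu
  funext j
  have := congrFun h j
  rw [rotCLM_apply] at this
  have hl : lam j ≠ 0 := by
    intro h0
    have := hmod j
    rw [h0] at this
    simp at this
  simpa [pow_ne_zero _ hl] using this

end Rot

/-- Let `λ_1, …, λ_n` be unimodular complex numbers of finite order, let `G` be
the (finite cyclic) group they generate, and let `φ(z) = (λ_1 z_1, …, λ_n z_n)`.
For every unimodular `μ ∉ G` and every Bloch function `g` on `𝔻ⁿ`, there is a
Bloch function `f`, unique on `𝔻ⁿ`, with `f ∘ φ − μ f = g`. -/
theorem resolvent_of_diagonal_rotation_symbol (n : ℕ) (lam : Fin n → ℂ)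
    (hmod : ∀ j, ‖lam j‖ = 1)
    (hord : ∀ j, ∃ k : ℕ, 0 < k ∧ lam j ^ k = 1)
    (φ : (Fin n → ℂ) → Fin n → ℂ)
    (hφ : ∀ z : Fin n → ℂ, ∀ j, φ z j = lam j * z j)
    (μ : ℂ) (hμ : ‖μ‖ = 1)
    (hμG : ¬ ∃ k : Fin n → ℕ, μ = ∏ j, lam j ^ k j) :
    ∀ g : (Fin n → ℂ) → ℂ, IsBlochPoly n g →
      (∃ f : (Fin n → ℂ) → ℂ, IsBlochPoly n f ∧
        ∀ z ∈ polydisk n, f (φ z) - μ * f z = g z) ∧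
      (∀ f₁ f₂ : (Fin n → ℂ) → ℂ, IsBlochPoly n f₁ → IsBlochPoly n f₂ →
        (∀ z ∈ polydisk n, f₁ (φ z) - μ * f₁ z = g z) →
        (∀ z ∈ polydisk n, f₂ (φ z) - μ * f₂ z = g z) →
        EqOn f₁ f₂ (polydisk n)) := by
  classical
  have hne : ∀ j, lam j ≠ 0 := by
    intro j h0
    have := hmod j
    rw [h0] at this
    simp at this
  have hfin : ∀ j, IsOfFinOrder (lam j) := fun j =>
    isOfFinOrder_iff_pow_eq_one.2 (hord j)
  set m : ℕ := Finset.univ.lcm (fun j => orderOf (lam j)) with hm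
  have hm0 : m ≠ 0 := by
    rw [hm, Ne, Finset.lcm_eq_zero_iff]
    rintro ⟨j, -, hj⟩
    exact ((hfin j).orderOf_pos).ne' hj
  have hlam_pow : ∀ j, lam j ^ m = 1 := fun j => orderOf_dvd_iff_pow_eq_one.1 <| by
    rw [hm]; exact Finset.dvd_lcm (Finset.mem_univ j)
  have hμm : μ ^ m ≠ 1 := aux_mu_pow_ne_one hne hm hm0 hμG
  have hc0 : (1 : ℂ) - μ ^ m ≠ 0 := sub_ne_zero.2 (Ne.symm hμm)
  set c : ℂ := (1 - μ ^ m)⁻¹ with hcdef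
  -- rotation identities
  have hrot_zero : ∀ z : Fin n → ℂ, rotCLM lam 0 z = z := fun z =>
    funext fun j => by rw [rotCLM_apply, pow_zero, one_mul]
  have hrot_m : ∀ z : Fin n → ℂ, rotCLM lam m z = z := fun z =>
    funext fun j => by rw [rotCLM_apply, hlam_pow j, one_mul]
  have hrot_succ : ∀ (i : ℕ) (z : Fin n → ℂ), rotCLM lam i (φ z) = rotCLM lam (i+1) z :=
    fun i z => funext fun j => by rw [rotCLM_apply, rotCLM_apply, hφ, pow_succ]; ring
  have hrot_succ' : ∀ (i : ℕ) (z : Fin n → ℂ), φ (rotCLM lam i z) = rotCLM lam (i+1) z :=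
    fun i z => funext fun j => by rw [hφ, rotCLM_apply, rotCLM_apply, pow_succ]; ring
  intro g hg
  obtain ⟨hgdiff, hgbdd⟩ := hg
  constructor
  · -- existence
    obtain ⟨M, hM⟩ := hgbdd
    set M' : ℝ := max M 0 with hM'def
    have hM'0 : (0:ℝ) ≤ M' := le_max_right M 0
    have hM' : ∀ w ∈ polydisk n, ∀ v : Fin n → ℂ, v ≠ 0 →
        ‖fderiv ℂ g w v‖ / Real.sqrt (polyH n w v) ≤ M' := by
      intro w hw v hv
      refine (le_Qpoly g hw hv).trans (le_trans ?_ (le_max_left M 0))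
      exact hM ⟨w, hw, rfl⟩
    set f : (Fin n → ℂ) → ℂ :=
      fun z => c * ∑ i ∈ Finset.range m, μ ^ (m - 1 - i) * g (rotCLM lam i z) with hfdef
    have hgat : ∀ w ∈ polydisk n, DifferentiableAt ℂ g w := fun w hw =>
      hgdiff.differentiableAt ((polydisk_open n).mem_nhds hw)
    have hfder : ∀ z ∈ polydisk n, HasFDerivAt f
        (c • ∑ i ∈ Finset.range m,
          (μ ^ (m - 1 - i)) • ((fderiv ℂ g (rotCLM lam i z)).comp (rotCLM lam i))) z := by
      intro z hz
      have h1 : ∀ i ∈ Finset.range m,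
          HasFDerivAt (fun z => μ ^ (m-1-i) * g (rotCLM lam i z))
          ((μ ^ (m-1-i)) • ((fderiv ℂ g (rotCLM lam i z)).comp (rotCLM lam i))) z := by
        intro i _
        have hmem := rot_mem lam hmod i hz
        have hgd : HasFDerivAt g (fderiv ℂ g (rotCLM lam i z)) (rotCLM lam i z) :=
          (hgat _ hmem).hasFDerivAt
        exact (hgd.comp z (rotCLM lam i).hasFDerivAt).const_mul _
      exact (HasFDerivAt.fun_sum h1).const_mul c
    have hfdiff : DifferentiableOn ℂ f (polydisk n) := fun z hz =>
      ((hfder z hz).differentiableAt).differentiableWithinAt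
    have hB0 : (0:ℝ) ≤ ‖c‖ * (m * M') := by positivity
    have hQf : ∀ z ∈ polydisk n, Qpoly n f z ≤ ‖c‖ * (m * M') := by
      intro z hz
      apply Qpoly_le_of_bound hB0
      intro u hu
      rw [(hfder z hz).fderiv]
      have hstep : ‖(c • ∑ i ∈ Finset.range m,
            (μ ^ (m-1-i)) • ((fderiv ℂ g (rotCLM lam i z)).comp (rotCLM lam i))) u‖
          ≤ ‖c‖ * ∑ i ∈ Finset.range m, ‖fderiv ℂ g (rotCLM lam i z) (rotCLM lam i u)‖ := by
        rw [ContinuousLinearMap.smul_apply, norm_smul, ContinuousLinearMap.sum_apply]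
        refine mul_le_mul_of_nonneg_left ?_ (norm_nonneg c)
        refine (norm_sum_le _ _).trans (le_of_eq ?_)
        refine Finset.sum_congr rfl fun i _ => ?_
        rw [ContinuousLinearMap.smul_apply, ContinuousLinearMap.coe_comp',
          Function.comp_apply, norm_smul, norm_pow, hμ, one_pow, one_mul]
      by_cases hs : Real.sqrt (polyH n z u) = 0
      · rw [hs, div_zero]; exact hB0
      · have hspos : 0 < Real.sqrt (polyH n z u) :=
          lt_of_le_of_ne (Real.sqrt_nonneg _) (Ne.symm hs)
        calc ‖(c • ∑ i ∈ Finset.range m,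
              (μ ^ (m-1-i)) • ((fderiv ℂ g (rotCLM lam i z)).comp (rotCLM lam i))) u‖
              / Real.sqrt (polyH n z u)
            ≤ (‖c‖ * ∑ i ∈ Finset.range m,
                ‖fderiv ℂ g (rotCLM lam i z) (rotCLM lam i u)‖) / Real.sqrt (polyH n z u) := by
              gcongr
          _ = ‖c‖ * ∑ i ∈ Finset.range m,
                ‖fderiv ℂ g (rotCLM lam i z) (rotCLM lam i u)‖ / Real.sqrt (polyH n z u) := by
              rw [mul_div_assoc, Finset.sum_div]
          _ ≤ ‖c‖ * ∑ _i ∈ Finset.range m, M' := by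
              gcongr with i hi
              rw [← rot_polyH lam hmod i z u]
              exact hM' _ (rot_mem lam hmod i hz) _ (rot_ne_zero lam hmod i hu)
          _ = ‖c‖ * (m * M') := by
              rw [Finset.sum_const, Finset.card_range, nsmul_eq_mul]
    have hbdd : BddAbove (blochValuesPoly n f) := by
      refine ⟨‖c‖ * (m * M'), ?_⟩
      rintro r ⟨z, hz, rfl⟩
      exact hQf z hz
    refine ⟨f, ⟨hfdiff, hbdd⟩, ?_⟩
    intro z hz
    set a : ℕ → ℂ := fun i => μ ^ (m - i) * g (rotCLM lam i z) with ha
    have h1 : f (φ z) = c * ∑ i ∈ Finset.range m, a (i+1) := by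
      simp only [hfdef]
      congr 1
      refine Finset.sum_congr rfl fun i hi => ?_
      rw [hrot_succ i z, ha]
      simp only
      congr 2
      omega
    have h2 : μ * f z = c * ∑ i ∈ Finset.range m, a i := by
      simp only [hfdef]
      rw [mul_left_comm]
      congr 1
      rw [Finset.mul_sum]
      refine Finset.sum_congr rfl fun i hi => ?_
      have hi' := Finset.mem_range.1 hi
      have he : (m-1-i)+1 = m - i := by omega
      rw [ha]
      simp only
      rw [← mul_assoc, ← pow_succ', he]
    rw [h1, h2, ← mul_sub, ← Finset.sum_sub_distrib, Finset.sum_range_sub a]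
    have ham : a m = g z := by
      rw [ha]; simp only [Nat.sub_self, pow_zero, one_mul, hrot_m z]
    have ha0 : a 0 = μ ^ m * g z := by
      rw [ha]; simp only [Nat.sub_zero, hrot_zero z]
    rw [ham, ha0]
    have he2 : g z - μ ^ m * g z = (1 - μ ^ m) * g z := by ring
    rw [he2, hcdef, inv_mul_cancel_left₀ hc0]
  · -- uniqueness
    intro f₁ f₂ _ _ h₁ h₂ z hz
    have key : ∀ i : ℕ, f₁ (rotCLM lam i z) - f₂ (rotCLM lam i z)
        = μ ^ i * (f₁ z - f₂ z) := by
      intro i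
      induction i with
      | zero => simp [hrot_zero z]
      | succ i ih =>
        have hw := rot_mem lam hmod i hz
        have e1 := h₁ _ hw
        have e2 := h₂ _ hw
        rw [← hrot_succ' i z]
        linear_combination e1 - e2 + μ * ih
    have hkm := key m
    rw [hrot_m z] at hkm
    have hz0 : (1 - μ ^ m) * (f₁ z - f₂ z) = 0 := by linear_combination hkm
    exact sub_eq_zero.1 ((mul_eq_zero.1 hz0).resolve_left hc0)
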